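/- Proposition (essential-value-prop, assertion 3, arithmetic form): with the essential key values ω₀, …, ω_{l+1} defined from the formal Puiseux pairs as in the context, for every 1 ≤ k ≤ l+1 the subgroup ℤω₀ + ℤω₁ + ⋯ + ℤω_{k−1} of ℤ equals (p_k·p_{k+1}⋯p_{l+1})·ℤ, and p_k is the least positive integer α such that α·ω_k ∈ ℤω₀ + ℤω₁ + ⋯ + ℤω_{k−1}. -/

import Mathlib

/-- Proposition `essential-value-prop`, assertion (3) (arithmetic form): with the essential
key values `ω₀, …, ω_{l+1}` defined from the formal Puiseux pairs
`(q₁,p₁), …, (q_{l+1},p_{l+1})` by `ω₀ = p₁⋯p_{l+1}` and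
`ω_k = p_{k-1}·ω_{k-1} + (q_k − q_{k-1}·p_k)·p_{k+1}⋯p_{l+1}`, for every `1 ≤ k ≤ l+1`
the subgroup `ℤω₀ + ⋯ + ℤω_{k-1}` of `ℤ` equals `(p_k·p_{k+1}⋯p_{l+1})·ℤ`, and `p_k` is
the least positive integer `α` with `α·ω_k ∈ ℤω₀ + ⋯ + ℤω_{k-1}`. -/
theorem essential_key_values_span (l : ℕ) (p q : ℕ → ℤ)
    (hp0 : p 0 = 1) (hq0 : q 0 = 1)
    (hp : ∀ k, 1 ≤ k → k ≤ l → 2 ≤ p k)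
    (hpl : 1 ≤ p (l + 1))
    (hcop : ∀ k, 1 ≤ k → k ≤ l + 1 → IsCoprime (p k) (q k))
    (ω : ℕ → ℤ)
    (hω0 : ω 0 = ∏ i ∈ Finset.Icc 1 (l + 1), p i)
    (hωk : ∀ k, 1 ≤ k → k ≤ l + 1 →
      ω k = p (k - 1) * ω (k - 1) +
        (q k - q (k - 1) * p k) * ∏ i ∈ Finset.Icc (k + 1) (l + 1), p i) :
    ∀ k, 1 ≤ k → k ≤ l + 1 →
      (∀ m : ℤ,
        (∃ β : ℕ → ℤ, m = ∑ i ∈ Finset.range k, β i * ω i) ↔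
        (∃ t : ℤ, m = t * ∏ i ∈ Finset.Icc k (l + 1), p i)) ∧
      IsLeast {α : ℤ | 0 < α ∧
        ∃ β : ℕ → ℤ, α * ω k = ∑ i ∈ Finset.range k, β i * ω i} (p k) := by
  set P : ℕ → ℤ := fun k => ∏ i ∈ Finset.Icc k (l + 1), p i with hPdef
  have hppos : ∀ i, i ≤ l + 1 → 0 < p i := by
    intro i hi
    rcases Nat.eq_zero_or_pos i with h | h
    · subst h; simp [hp0]
    rcases Nat.lt_or_ge i (l + 1) with h' | h'
    · have := hp i h (by omega); linarith
    · have : i = l + 1 := by omega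
      subst this; linarith
  have hPpos : ∀ k, 0 < P k := by
    intro k
    apply Finset.prod_pos
    intro i hi
    exact hppos i (Finset.mem_Icc.mp hi).2
  have hPstep : ∀ k, k ≤ l + 1 → P k = p k * P (k + 1) := by
    intro k hk
    have e : ∀ a : ℕ, Finset.Icc a (l + 1) = Finset.Ico a (l + 2) := by
      intro a; rw [← Finset.Ico_add_one_right_eq_Icc]; rfl
    simp only [hPdef, e]
    exact Finset.prod_eq_prod_Ico_succ_bot (by omega) p
  -- ω k = a * P (k+1) with a coprime to p k (for k ≥ 1)
  have ha : ∀ k, k ≤ l + 1 → ∃ a, ω k = a * P (k + 1) ∧ (1 ≤ k → IsCoprime (p k) a) := by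
    intro k hk
    induction k with
    | zero =>
      refine ⟨1, by rw [hω0, one_mul], by omega⟩
    | succ k ih =>
      obtain ⟨a, hωa, -⟩ := ih (by omega)
      have hrec := hωk (k + 1) (by omega) hk
      simp only [Nat.add_sub_cancel] at hrec
      refine ⟨q (k + 1) + (p k * a * p (k + 1) - q k * p (k + 1)), ?_, ?_⟩
      · rw [hrec, hωa, hPstep (k + 1) hk]
        ring
      · intro _
        have h1 : IsCoprime (p (k + 1)) (q (k + 1)) := hcop (k + 1) (by omega) hk
        have := h1.add_mul_right_right (p k * a - q k)
        convert this using 2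
        exacts [rfl, by ring]
  -- span characterization
  have hspan : ∀ k, 1 ≤ k → k ≤ l + 1 →
      ∀ m : ℤ, (∃ β : ℕ → ℤ, m = ∑ i ∈ Finset.range k, β i * ω i) ↔ P k ∣ m := by
    intro k hk1 hk2
    induction k with
    | zero => omega
    | succ k ih =>
      rcases Nat.eq_zero_or_pos k with rfl | hk
      · intro m
        constructor
        · rintro ⟨β, rfl⟩
          rw [Finset.sum_range_one, hω0]
          exact Dvd.intro_left _ rfl
        · rintro ⟨t, rfl⟩
          exact ⟨fun _ => t, by rw [Finset.sum_range_one, hω0]; exact mul_comm _ _⟩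
      · have ihm := ih hk (by omega)
        obtain ⟨a, hωa, hcopa⟩ := ha k (by omega)
        have hcopa := hcopa hk
        have hPk : P k = p k * P (k + 1) := hPstep k (by omega)
        intro m
        constructor
        · rintro ⟨β, rfl⟩
          rw [Finset.sum_range_succ]
          have h1 : P (k + 1) ∣ ∑ i ∈ Finset.range k, β i * ω i := by
            have h2 : P k ∣ ∑ i ∈ Finset.range k, β i * ω i := (ihm _).mp ⟨β, rfl⟩
            exact dvd_trans (Dvd.intro_left _ hPk.symm) h2
          exact dvd_add h1 (by rw [hωa, ← mul_assoc]; exact Dvd.intro_left _ rfl)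
        · rintro ⟨t, rfl⟩
          obtain ⟨u, v, huv⟩ := hcopa
          have key : P (k + 1) * t = t * u * P k + t * v * ω k := by
            rw [hωa, hPk]
            linear_combination (-(t * P (k + 1))) * huv
          obtain ⟨β, hβ⟩ := (ihm (t * u * P k)).mpr (Dvd.intro_left (t * u) rfl)
          refine ⟨fun i => if i = k then t * v else β i, ?_⟩
          have e1 : (∑ i ∈ Finset.range k, (if i = k then t * v else β i) * ω i) =
              ∑ i ∈ Finset.range k, β i * ω i :=
            Finset.sum_congr rfl fun i hi => by
              rw [if_neg (Nat.ne_of_lt (Finset.mem_range.mp hi))]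
          simp only [Finset.sum_range_succ, eq_self_iff_true, if_true, e1]
          rw [key, hβ]
  intro k hk1 hk2
  obtain ⟨a, hωa, hcopa⟩ := ha k hk2
  have hcopa := hcopa hk1
  have hsp := hspan k hk1 hk2
  have hPk : P k = p k * P (k + 1) := hPstep k hk2
  constructor
  · intro m
    rw [hsp m]
    constructor
    · rintro ⟨c, hc⟩; exact ⟨c, hc.trans (mul_comm _ _)⟩
    · rintro ⟨c, hc⟩; exact ⟨c, hc.trans (mul_comm _ _)⟩
  · constructor
    · refine ⟨hppos k hk2, ?_⟩
      rw [hsp (p k * ω k)]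
      exact ⟨a, by rw [hωa, hPk]; ring⟩
    · rintro α ⟨hα, β, hβ⟩
      have hdvd : P k ∣ α * ω k := (hsp (α * ω k)).mp ⟨β, hβ⟩
      rw [hωa, hPk, ← mul_assoc] at hdvd
      have hpk : p k ∣ α * a :=
        (mul_dvd_mul_iff_right (ne_of_gt (hPpos (k + 1)))).mp hdvd
      exact Int.le_of_dvd hα (hcopa.dvd_of_dvd_mul_right hpk)
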